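/- In the setup below, let φ : ℂ[X_J : J ∈ 𝒥] → ℂ[{z_p}_{p∈P}, t] be the ℂ-algebra homomorphism of polynomial rings determined by φ(X_J) = t·∏_{p ∈ max_{<'} J} z_p. Then the kernel of φ is generated, as an ideal, by the binomials X_{J1}·X_{J2} − X_{J1 ∪ J2}·X_{J1 *' J2} where J1, J2 range over pairs of order ideals in 𝒥 that are incomparable with respect to inclusion (J1 ⊄ J2 and J2 ⊄ J1). -/

import Mathlib

open Pointwise

/-- `J` is an order ideal (lower set) with respect to the strict order relation `r`. -/
def IsLowerIdeal {P : Type*} (r : P → P → Prop) (J : Set P) : Prop :=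
  ∀ ⦃p q : P⦄, r p q → q ∈ J → p ∈ J

/-- The set of `r`-maximal elements of `J`. -/
def maxElems {P : Type*} (r : P → P → Prop) (J : Set P) : Set P :=
  {p ∈ J | ∀ q ∈ J, ¬ r p q}

/-- The 0/1 indicator vector of `A ⊆ P`, as a point of `ℝ^P`. -/
noncomputable def ind {P : Type*} (A : Set P) : P → ℝ :=
  A.indicator 1

/-- The order ideal of `(P, r)` generated by `A`. -/
def genIdeal {P : Type*} (r : P → P → Prop) (A : Set P) : Set P :=
  {p | ∃ q ∈ A, p = q ∨ r p q}

/-- The Hibi–Li operation `J1 *' J2` relative to the order `r`: the order ideal of `(P, r)`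
generated by `(J1 ∩ J2) ∩ (max_r J1 ∪ max_r J2)`. -/
def starOp {P : Type*} (r : P → P → Prop) (J1 J2 : Set P) : Set P :=
  genIdeal r ((J1 ∩ J2) ∩ (maxElems r J1 ∪ maxElems r J2))

/-- The relative poset polytope `R(P, lt, lt')`: the convex hull of the points
`1_{max_{lt'} J}` over all order ideals `J` of `(P, lt)`. -/
noncomputable def RPP {P : Type*} (lt lt' : P → P → Prop) : Set (P → ℝ) :=
  convexHull ℝ {x | ∃ J : Set P, IsLowerIdeal lt J ∧ x = ind (maxElems lt' J)}

/-- The dilation `m·Q = {m·x : x ∈ Q}`. -/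
def dilate {P : Type*} (m : ℕ) (Q : Set (P → ℝ)) : Set (P → ℝ) :=
  (fun x => (m : ℝ) • x) '' Q

/-- The order polytope of `(P, lt)`. -/
def orderPolytope {P : Type*} (lt : P → P → Prop) : Set (P → ℝ) :=
  {x | (∀ p, 0 ≤ x p ∧ x p ≤ 1) ∧ ∀ p q, lt q p → x p ≤ x q}

/-- The chain polytope of `(P, lt)`. -/
def chainPolytope {P : Type*} (lt : P → P → Prop) : Set (P → ℝ) :=
  {x | (∀ p, 0 ≤ x p) ∧ ∀ (k : ℕ) (c : Fin k → P),
    (∀ i j : Fin k, i < j → lt (c i) (c j)) → (∑ i, x (c i)) ≤ 1}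


section Aux
variable {P : Type*} [Fintype P] {lt lt' : P → P → Prop}

lemma maxElems_subset {J : Set P} : maxElems lt' J ⊆ J := fun _ h => h.1

lemma exists_max_above (hlt'irr : ∀ p, ¬ lt' p p) (hlt'tr : ∀ a b c, lt' a b → lt' b c → lt' a c)
    {J : Set P} : ∀ p ∈ J, ∃ q ∈ maxElems lt' J, p = q ∨ lt' p q := by
  classical
  have key : ∀ (n : ℕ) (p : P), p ∈ J → {r | r ∈ J ∧ lt' p r}.ncard ≤ n →
      ∃ q ∈ maxElems lt' J, p = q ∨ lt' p q := by
    intro n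
    induction n with
    | zero =>
      intro p hp hc
      refine ⟨p, ⟨hp, fun q hq hpq => ?_⟩, Or.inl rfl⟩
      have : q ∈ {r | r ∈ J ∧ lt' p r} := ⟨hq, hpq⟩
      have hfin : {r | r ∈ J ∧ lt' p r}.Finite := Set.toFinite _
      have := Set.ncard_pos (s := {r | r ∈ J ∧ lt' p r}) hfin |>.2 ⟨q, this⟩
      omega
    | succ n ih =>
      intro p hp hc
      by_cases hmax : ∀ q ∈ J, ¬ lt' p q
      · exact ⟨p, ⟨hp, hmax⟩, Or.inl rfl⟩
      · push_neg at hmax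
        obtain ⟨r, hrJ, hpr⟩ := hmax
        have hss : {s | s ∈ J ∧ lt' r s} ⊂ {s | s ∈ J ∧ lt' p s} := by
          constructor
          · intro s hs; exact ⟨hs.1, hlt'tr _ _ _ hpr hs.2⟩
          · intro hsub
            have : r ∈ {s | s ∈ J ∧ lt' r s} := hsub ⟨hrJ, hpr⟩
            exact hlt'irr r this.2
        have hlt := Set.ncard_lt_ncard hss (Set.toFinite _)
        obtain ⟨q, hq, hrq⟩ := ih r hrJ (by omega)
        refine ⟨q, hq, Or.inr ?_⟩
        rcases hrq with rfl | h
        · exact hpr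
        · exact hlt'tr _ _ _ hpr h
  intro p hp
  exact key _ p hp le_rfl

lemma genIdeal_maxElems (hlt'irr : ∀ p, ¬ lt' p p) (hlt'tr : ∀ a b c, lt' a b → lt' b c → lt' a c)
    (hweak : ∀ p q, lt' p q → lt p q) {J : Set P} (hJ : IsLowerIdeal lt J) :
    genIdeal lt (maxElems lt' J) = J := by
  apply Set.Subset.antisymm
  · rintro p ⟨q, hq, rfl | hpq⟩
    · exact hq.1
    · exact hJ hpq hq.1
  · intro p hp
    obtain ⟨q, hq, h⟩ := exists_max_above hlt'irr hlt'tr p hp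
    exact ⟨q, hq, h.imp id (hweak _ _)⟩

lemma maxElems_union (hweak : ∀ p q, lt' p q → lt p q)
    {J1 J2 : Set P} (hJ1 : IsLowerIdeal lt J1) (hJ2 : IsLowerIdeal lt J2) :
    maxElems lt' (J1 ∪ J2) =
      (maxElems lt' J1 \ J2) ∪ (maxElems lt' J2 \ J1) ∪ (maxElems lt' J1 ∩ maxElems lt' J2) := by
  ext p
  constructor
  · rintro ⟨hp, hmax⟩
    rcases hp with h1 | h2
    · have hm1 : p ∈ maxElems lt' J1 := ⟨h1, fun q hq => hmax q (Or.inl hq)⟩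
      by_cases h2 : p ∈ J2
      · exact Or.inr ⟨hm1, ⟨h2, fun q hq => hmax q (Or.inr hq)⟩⟩
      · exact Or.inl (Or.inl ⟨hm1, h2⟩)
    · have hm2 : p ∈ maxElems lt' J2 := ⟨h2, fun q hq => hmax q (Or.inr hq)⟩
      by_cases h1 : p ∈ J1
      · exact Or.inr ⟨⟨h1, fun q hq => hmax q (Or.inl hq)⟩, hm2⟩
      · exact Or.inl (Or.inr ⟨hm2, h1⟩)
  · rintro ((⟨hm1, h2⟩ | ⟨hm2, h1⟩) | ⟨hm1, hm2⟩)
    · refine ⟨Or.inl hm1.1, fun q hq hpq => ?_⟩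
      rcases hq with hq | hq
      · exact hm1.2 q hq hpq
      · exact h2 (hJ2 (hweak _ _ hpq) hq)
    · refine ⟨Or.inr hm2.1, fun q hq hpq => ?_⟩
      rcases hq with hq | hq
      · exact h1 (hJ1 (hweak _ _ hpq) hq)
      · exact hm2.2 q hq hpq
    · refine ⟨Or.inl hm1.1, fun q hq hpq => ?_⟩
      rcases hq with hq | hq
      · exact hm1.2 q hq hpq
      · exact hm2.2 q hq hpq

lemma maxElems_star (hlt'tr : ∀ a b c, lt' a b → lt' b c → lt' a c)
    {J1 J2 : Set P} :
    maxElems lt' (starOp lt' J1 J2) =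
      (J1 ∩ J2) ∩ (maxElems lt' J1 ∪ maxElems lt' J2) := by
  ext p
  constructor
  · rintro ⟨⟨s, hs, h⟩, hmax⟩
    rcases h with rfl | hps
    · exact hs
    · exact (hmax s ⟨s, hs, Or.inl rfl⟩ hps).elim
  · intro hp
    refine ⟨⟨p, hp, Or.inl rfl⟩, ?_⟩
    rintro q ⟨s, hs, hqs⟩ hpq
    have hps : lt' p s := by
      rcases hqs with rfl | h
      · exact hpq
      · exact hlt'tr _ _ _ hpq h
    rcases hp.2 with hm | hm
    · exact hm.2 s hs.1.1 hps
    · exact hm.2 s hs.1.2 hps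

end Aux

section AuxAlg

open MvPolynomial
open scoped Classical

variable {P : Type*} [Fintype P] (lt lt' : P → P → Prop)

lemma lower_union {J1 J2 : Set P} (h1 : IsLowerIdeal lt J1) (h2 : IsLowerIdeal lt J2) :
    IsLowerIdeal lt (J1 ∪ J2) := fun _ _ hpq hq => hq.imp (h1 hpq) (h2 hpq)

/-- The map defining `φ` on variables. -/
noncomputable def phiF (J : {J : Set P // IsLowerIdeal lt J}) : MvPolynomial (P ⊕ Unit) ℂ :=
  MvPolynomial.X (Sum.inr ()) *
    ∏ p ∈ (Set.toFinite (maxElems lt' J.1)).toFinset, MvPolynomial.X (Sum.inl p)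

/-- Exponent vector of `φ(X_J)`. -/
noncomputable def vv (J : {J : Set P // IsLowerIdeal lt J}) : (P ⊕ Unit) →₀ ℕ :=
  Finsupp.single (Sum.inr ()) 1 +
    ∑ p ∈ (Set.toFinite (maxElems lt' J.1)).toFinset, Finsupp.single (Sum.inl p) 1

/-- Exponent vector of `φ` applied to a monomial. -/
noncomputable def psi (d : {J : Set P // IsLowerIdeal lt J} →₀ ℕ) : (P ⊕ Unit) →₀ ℕ :=
  d.sum fun J n => n • vv lt lt' J

lemma monomial_prod {σ α : Type*} (s : Finset α) (g : α → (σ →₀ ℕ)) :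
    ∏ x ∈ s, (monomial (g x) (1 : ℂ)) = monomial (∑ x ∈ s, g x) 1 := by
  classical
  induction s using Finset.induction with
  | empty => simp
  | insert _ _ h ih => rw [Finset.prod_insert h, ih, monomial_mul, Finset.sum_insert h, one_mul]

lemma phiF_eq (J : {J : Set P // IsLowerIdeal lt J}) :
    phiF lt lt' J = monomial (vv lt lt' J) 1 := by
  rw [phiF, vv]
  rw [Finset.prod_congr rfl fun p _ => show (X (Sum.inl p) : MvPolynomial (P ⊕ Unit) ℂ) =
      monomial (Finsupp.single (Sum.inl p) 1) 1 from rfl, monomial_prod,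
    show (X (Sum.inr ()) : MvPolynomial (P ⊕ Unit) ℂ) =
      monomial (Finsupp.single (Sum.inr ()) 1) 1 from rfl,
    monomial_mul, one_mul]

lemma vv_inr (J : {J : Set P // IsLowerIdeal lt J}) : vv lt lt' J (Sum.inr ()) = 1 := by
  simp [vv, Finsupp.single_apply, Finsupp.finset_sum_apply]

lemma vv_inl (J : {J : Set P // IsLowerIdeal lt J}) (p : P) :
    vv lt lt' J (Sum.inl p) = if p ∈ maxElems lt' J.1 then 1 else 0 := by
  classical
  simp [vv, Finsupp.single_apply, Finsupp.finset_sum_apply, Finset.sum_ite_eq', maxElems, Set.mem_setOf_eq]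
  congr 1

lemma psi_add (c c' : {J : Set P // IsLowerIdeal lt J} →₀ ℕ) :
    psi lt lt' (c + c') = psi lt lt' c + psi lt lt' c' :=
  Finsupp.sum_add_index' (by simp) (by intro a b1 b2; rw [add_smul])

lemma psi_single (J : {J : Set P // IsLowerIdeal lt J}) :
    psi lt lt' (Finsupp.single J 1) = vv lt lt' J := by
  rw [psi, Finsupp.sum_single_index] <;> simp

lemma psi_inr (d : {J : Set P // IsLowerIdeal lt J} →₀ ℕ) :
    psi lt lt' d (Sum.inr ()) = d.sum fun _ n => n := by
  rw [psi, Finsupp.sum, Finsupp.finset_sum_apply, Finsupp.sum]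
  exact Finset.sum_congr rfl fun J _ => by rw [Finsupp.smul_apply, vv_inr, smul_eq_mul, mul_one]

lemma psi_inl (d : {J : Set P // IsLowerIdeal lt J} →₀ ℕ) (p : P) :
    psi lt lt' d (Sum.inl p) =
      ∑ J ∈ d.support, d J * (if p ∈ maxElems lt' J.1 then 1 else 0) := by
  classical
  rw [psi, Finsupp.sum, Finsupp.finset_sum_apply]
  exact Finset.sum_congr rfl fun J _ => by rw [Finsupp.smul_apply, vv_inl, smul_eq_mul]

lemma phi_monomial (d : {J : Set P // IsLowerIdeal lt J} →₀ ℕ) :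
    aeval (phiF lt lt') (monomial d (1 : ℂ)) = monomial (psi lt lt' d) 1 := by
  rw [aeval_monomial, map_one, one_mul, Finsupp.prod]
  rw [Finset.prod_congr rfl fun J _ => by rw [phiF_eq, monomial_pow, one_pow]]
  rw [monomial_prod]
  rfl

end AuxAlg
section AuxAlg2

open MvPolynomial
open scoped Classical

variable {P : Type*} [Fintype P] (lt lt' : P → P → Prop)

lemma count_id (hlt'tr : ∀ a b c, lt' a b → lt' b c → lt' a c)
    (hweak : ∀ p q, lt' p q → lt p q)
    {J1 J2 : Set P} (hJ1 : IsLowerIdeal lt J1) (hJ2 : IsLowerIdeal lt J2) (p : P) :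
    ((if p ∈ maxElems lt' J1 then 1 else 0) + (if p ∈ maxElems lt' J2 then 1 else 0) : ℕ) =
    (if p ∈ maxElems lt' (J1 ∪ J2) then 1 else 0) +
      (if p ∈ maxElems lt' (starOp lt' J1 J2) then 1 else 0) := by
  rw [maxElems_union hweak hJ1 hJ2, maxElems_star hlt'tr]
  have h1 : maxElems lt' J1 ⊆ J1 := maxElems_subset
  have h2 : maxElems lt' J2 ⊆ J2 := maxElems_subset
  by_cases hA : p ∈ maxElems lt' J1 <;> by_cases hB : p ∈ maxElems lt' J2 <;>
    by_cases hC : p ∈ J1 <;> by_cases hD : p ∈ J2 <;>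
    first
      | (exact absurd (h1 hA) hC)
      | (exact absurd (h2 hB) hD)
      | simp [Set.mem_union, Set.mem_inter_iff, Set.mem_diff, hA, hB, hC, hD]

lemma key_v (hlt'tr : ∀ a b c, lt' a b → lt' b c → lt' a c)
    (hweak : ∀ p q, lt' p q → lt p q)
    (J1 J2 J3 J4 : {J : Set P // IsLowerIdeal lt J})
    (h3 : J3.1 = J1.1 ∪ J2.1) (h4 : J4.1 = starOp lt' J1.1 J2.1) :
    vv lt lt' J1 + vv lt lt' J2 = vv lt lt' J3 + vv lt lt' J4 := by
  ext x
  rw [Finsupp.add_apply, Finsupp.add_apply]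
  cases x with
  | inr u => rw [vv_inr, vv_inr, vv_inr, vv_inr]
  | inl p =>
    rw [vv_inl, vv_inl, vv_inl, vv_inl, h3, h4]
    exact count_id lt lt' hlt'tr hweak J1.2 J2.2 p

/-- total degree of an exponent vector -/
def degf (d : {J : Set P // IsLowerIdeal lt J} →₀ ℕ) : ℕ := d.sum fun _ n => n

/-- termination weight -/
noncomputable def mu (d : {J : Set P // IsLowerIdeal lt J} →₀ ℕ) : ℕ :=
  d.sum fun J n => n * 2 ^ (J.1.ncard)

lemma degf_add (c c' : {J : Set P // IsLowerIdeal lt J} →₀ ℕ) :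
    degf lt (c + c') = degf lt c + degf lt c' :=
  Finsupp.sum_add_index' (by simp) (by intros; rfl)

lemma degf_single (J : {J : Set P // IsLowerIdeal lt J}) (n : ℕ) :
    degf lt (Finsupp.single J n) = n := by
  rw [degf, Finsupp.sum_single_index]; rfl

lemma mu_add (c c' : {J : Set P // IsLowerIdeal lt J} →₀ ℕ) :
    mu lt (c + c') = mu lt c + mu lt c' :=
  Finsupp.sum_add_index' (by simp) (by intros; rw [add_mul])

lemma mu_single (J : {J : Set P // IsLowerIdeal lt J}) (n : ℕ) :
    mu lt (Finsupp.single J n) = n * 2 ^ (J.1.ncard) := by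
  rw [mu, Finsupp.sum_single_index]; rw [zero_mul]

lemma mu_le (d : {J : Set P // IsLowerIdeal lt J} →₀ ℕ) :
    mu lt d ≤ 2 ^ (Fintype.card P) * degf lt d := by
  rw [mu, degf, Finsupp.sum, Finsupp.sum, Finset.mul_sum]
  refine Finset.sum_le_sum fun J _ => ?_
  rw [mul_comm (2 ^ (Fintype.card P))]
  refine Nat.mul_le_mul_left _ (Nat.pow_le_pow_right (by norm_num) ?_)
  calc J.1.ncard ≤ (Set.univ : Set P).ncard :=
        Set.ncard_le_ncard (Set.subset_univ _) (Set.toFinite _)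
    _ = Fintype.card P := by rw [Set.ncard_univ, Nat.card_eq_fintype_card]

lemma chain_top (s : Finset {J : Set P // IsLowerIdeal lt J}) (hne : s.Nonempty)
    (hch : ∀ J1 ∈ s, ∀ J2 ∈ s, J1.1 ⊆ J2.1 ∨ J2.1 ⊆ J1.1) :
    ∃ m ∈ s, ∀ J ∈ s, J.1 ⊆ m.1 := by
  obtain ⟨m, hm, hmax'⟩ := Finset.exists_maximal hne
  have hmax : ∀ J ∈ s, ¬ m < J := fun J hJ hlt => hlt.not_ge (hmax' hJ hlt.le)
  refine ⟨m, hm, fun J hJ => ?_⟩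
  rcases hch J hJ m hm with h | h
  · exact h
  · by_cases he : m = J
    · rw [he]
    · exact absurd (lt_of_le_of_ne (show m ≤ J from h) he) (hmax J hJ)

lemma top_determined (hlt'irr : ∀ p, ¬ lt' p p)
    (hlt'tr : ∀ a b c, lt' a b → lt' b c → lt' a c)
    (hweak : ∀ p q, lt' p q → lt p q)
    (d : {J : Set P // IsLowerIdeal lt J} →₀ ℕ) (m : {J : Set P // IsLowerIdeal lt J})
    (hm : m ∈ d.support) (htop : ∀ J ∈ d.support, J.1 ⊆ m.1) :
    genIdeal lt {p | psi lt lt' d (Sum.inl p) ≠ 0} = m.1 := by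
  have hset : ∀ p : P, psi lt lt' d (Sum.inl p) ≠ 0 ↔
      ∃ J ∈ d.support, p ∈ maxElems lt' J.1 := by
    intro p
    rw [psi_inl]
    constructor
    · intro h
      by_contra hc
      push_neg at hc
      exact h (Finset.sum_eq_zero fun J hJ => by simp [hc J hJ])
    · rintro ⟨J, hJ, hp⟩ h
      rw [Finset.sum_eq_zero_iff] at h
      have := h J hJ
      rw [if_pos hp, mul_one] at this
      exact Finsupp.mem_support_iff.1 hJ this
  apply Set.Subset.antisymm
  · rintro q ⟨p, hp, hqp⟩
    obtain ⟨J, hJ, hpM⟩ := (hset p).1 hp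
    have hpm : p ∈ m.1 := htop J hJ (maxElems_subset hpM)
    rcases hqp with rfl | h
    · exact hpm
    · exact m.2 h hpm
  · intro q hq
    rw [← genIdeal_maxElems hlt'irr hlt'tr hweak m.2] at hq
    obtain ⟨s, hs, h⟩ := hq
    exact ⟨s, (hset s).2 ⟨m, hm, hs⟩, h⟩

end AuxAlg2
section AuxAlg3

open MvPolynomial
open scoped Classical

variable {P : Type*} [Fintype P] (lt lt' : P → P → Prop)

lemma decomp_single (d : {J : Set P // IsLowerIdeal lt J} →₀ ℕ)
    (m : {J : Set P // IsLowerIdeal lt J}) (hm : m ∈ d.support) :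
    d = (d - Finsupp.single m 1) + Finsupp.single m 1 := by
  have hdm : d m ≠ 0 := Finsupp.mem_support_iff.1 hm
  ext J
  rw [Finsupp.add_apply, Finsupp.tsub_apply, Finsupp.single_apply]
  by_cases h : m = J
  · subst h; rw [if_pos rfl]; omega
  · simp [h]

lemma psi_inj (hlt'irr : ∀ p, ¬ lt' p p)
    (hlt'tr : ∀ a b c, lt' a b → lt' b c → lt' a c)
    (hweak : ∀ p q, lt' p q → lt p q) :
    ∀ (n : ℕ) (d e : {J : Set P // IsLowerIdeal lt J} →₀ ℕ), degf lt d = n →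
    (∀ J1 ∈ d.support, ∀ J2 ∈ d.support, J1.1 ⊆ J2.1 ∨ J2.1 ⊆ J1.1) →
    (∀ J1 ∈ e.support, ∀ J2 ∈ e.support, J1.1 ⊆ J2.1 ∨ J2.1 ⊆ J1.1) →
    psi lt lt' d = psi lt lt' e → d = e := by
  intro n
  induction n with
  | zero =>
    intro d e hd _ _ hpsi
    have hde : degf lt e = 0 := by
      rw [degf, ← psi_inr, ← hpsi, psi_inr]; exact hd
    have hz : ∀ f : {J : Set P // IsLowerIdeal lt J} →₀ ℕ, degf lt f = 0 → f = 0 := by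
      intro f hf
      ext J
      by_contra h
      have hJ : J ∈ f.support := Finsupp.mem_support_iff.2 h
      rw [degf, Finsupp.sum, Finset.sum_eq_zero_iff] at hf
      exact h (hf J hJ)
    rw [hz d hd, hz e hde]
  | succ n ih =>
    intro d e hd hcd hce hpsi
    have hde : degf lt e = n + 1 := by
      rw [degf, ← psi_inr, ← hpsi, psi_inr]; exact hd
    have hdne : d.support.Nonempty := by
      rw [Finset.nonempty_iff_ne_empty]
      intro h
      rw [degf, Finsupp.sum, h, Finset.sum_empty] at hd
      omega
    have hene : e.support.Nonempty := by
      rw [Finset.nonempty_iff_ne_empty]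
      intro h
      rw [degf, Finsupp.sum, h, Finset.sum_empty] at hde
      omega
    obtain ⟨m, hm, htopd⟩ := chain_top lt d.support hdne hcd
    obtain ⟨m', hm', htope⟩ := chain_top lt e.support hene hce
    have hmm : m = m' := by
      apply Subtype.ext
      rw [← top_determined lt lt' hlt'irr hlt'tr hweak d m hm htopd,
        ← top_determined lt lt' hlt'irr hlt'tr hweak e m' hm' htope, hpsi]
    subst hmm
    set d' := d - Finsupp.single m 1 with hd'
    set e' := e - Finsupp.single m 1 with he'
    have hdd : d = d' + Finsupp.single m 1 := decomp_single lt d m hm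
    have hee : e = e' + Finsupp.single m 1 := decomp_single lt e m hm'
    have hpsi' : psi lt lt' d' = psi lt lt' e' := by
      have h1 : psi lt lt' d' + vv lt lt' m = psi lt lt' e' + vv lt lt' m := by
        rw [← psi_single lt lt' m, ← psi_add, ← psi_add, ← hdd, ← hee, hpsi]
      exact add_right_cancel h1
    have hsub : d'.support ⊆ d.support := Finsupp.support_tsub
    have hsub' : e'.support ⊆ e.support := Finsupp.support_tsub
    have hdeg' : degf lt d' = n := by
      have := degf_add lt d' (Finsupp.single m 1)
      rw [← hdd, hd, degf_single] at this
      omega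
    have hres := ih d' e' hdeg'
      (fun J1 h1 J2 h2 => hcd J1 (hsub h1) J2 (hsub h2))
      (fun J1 h1 J2 h2 => hce J1 (hsub' h1) J2 (hsub' h2)) hpsi'
    rw [hdd, hee, hres]

end AuxAlg3
section AuxAlg4

open MvPolynomial
open scoped Classical

variable {P : Type*} [Fintype P] (lt lt' : P → P → Prop)

lemma mX (a : ({J : Set P // IsLowerIdeal lt J} →₀ ℕ)) (J : {J : Set P // IsLowerIdeal lt J}) :
    monomial a (1 : ℂ) * X J = monomial (a + Finsupp.single J 1) 1 := by
  rw [show (X J : MvPolynomial {J : Set P // IsLowerIdeal lt J} ℂ) =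
    monomial (Finsupp.single J 1) 1 from rfl, monomial_mul, one_mul]

lemma reduce (hstar : ∀ J1 J2 : Set P, IsLowerIdeal lt J1 → IsLowerIdeal lt J2 →
      IsLowerIdeal lt (starOp lt' J1 J2)) :
    ∀ (n : ℕ) (d : {J : Set P // IsLowerIdeal lt J} →₀ ℕ),
      2 ^ (Fintype.card P) * degf lt d - mu lt d < n →
      ∃ e : {J : Set P // IsLowerIdeal lt J} →₀ ℕ,
        (∀ J1 ∈ e.support, ∀ J2 ∈ e.support, J1.1 ⊆ J2.1 ∨ J2.1 ⊆ J1.1) ∧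
        monomial d (1 : ℂ) - monomial e 1 ∈
          Ideal.span
            {f : MvPolynomial {J : Set P // IsLowerIdeal lt J} ℂ |
              ∃ J1 J2 J3 J4 : {J : Set P // IsLowerIdeal lt J},
                ¬ J1.1 ⊆ J2.1 ∧ ¬ J2.1 ⊆ J1.1 ∧
                J3.1 = J1.1 ∪ J2.1 ∧ J4.1 = starOp lt' J1.1 J2.1 ∧
                f = MvPolynomial.X J1 * MvPolynomial.X J2 -
                      MvPolynomial.X J3 * MvPolynomial.X J4} := by
  intro n
  induction n with
  | zero => intro d h; omega
  | succ n ih =>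
    intro d h
    by_cases hch : ∀ J1 ∈ d.support, ∀ J2 ∈ d.support, J1.1 ⊆ J2.1 ∨ J2.1 ⊆ J1.1
    · exact ⟨d, hch, by rw [sub_self]; exact zero_mem _⟩
    · push_neg at hch
      obtain ⟨J1, hJ1, J2, hJ2, h12, h21⟩ := hch
      have hne : J1 ≠ J2 := fun h => h12 (h ▸ subset_rfl)
      have hd1 : d J1 ≠ 0 := Finsupp.mem_support_iff.1 hJ1
      have hd2 : d J2 ≠ 0 := Finsupp.mem_support_iff.1 hJ2
      set c := d - Finsupp.single J1 1 - Finsupp.single J2 1 with hc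
      have hdc : d = c + Finsupp.single J1 1 + Finsupp.single J2 1 := by
        have f1 : J1 = J1 → 1 ≤ d J1 := fun _ => Nat.one_le_iff_ne_zero.2 hd1
        ext J
        simp only [hc, Finsupp.add_apply, Finsupp.tsub_apply, Finsupp.single_apply]
        by_cases e1 : J1 = J <;> by_cases e2 : J2 = J
        · exact absurd (e1.trans e2.symm) hne
        · have : 1 ≤ d J := e1 ▸ Nat.one_le_iff_ne_zero.2 hd1
          simp only [if_pos e1, if_neg e2]; omega
        · have : 1 ≤ d J := e2 ▸ Nat.one_le_iff_ne_zero.2 hd2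
          simp only [if_neg e1, if_pos e2]; omega
        · simp only [if_neg e1, if_neg e2]; omega
      set J3 : {J : Set P // IsLowerIdeal lt J} :=
        ⟨J1.1 ∪ J2.1, lower_union lt J1.2 J2.2⟩ with hJ3
      set J4 : {J : Set P // IsLowerIdeal lt J} :=
        ⟨starOp lt' J1.1 J2.1, hstar _ _ J1.2 J2.2⟩ with hJ4
      set e' := c + Finsupp.single J3 1 + Finsupp.single J4 1 with he'
      have hgen : (X J1 * X J2 - X J3 * X J4 :
          MvPolynomial {J : Set P // IsLowerIdeal lt J} ℂ) ∈
          {f : MvPolynomial {J : Set P // IsLowerIdeal lt J} ℂ |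
            ∃ J1 J2 J3 J4 : {J : Set P // IsLowerIdeal lt J},
              ¬ J1.1 ⊆ J2.1 ∧ ¬ J2.1 ⊆ J1.1 ∧
              J3.1 = J1.1 ∪ J2.1 ∧ J4.1 = starOp lt' J1.1 J2.1 ∧
              f = MvPolynomial.X J1 * MvPolynomial.X J2 -
                    MvPolynomial.X J3 * MvPolynomial.X J4} :=
        ⟨J1, J2, J3, J4, h12, h21, rfl, rfl, rfl⟩
      have hkey : monomial d (1 : ℂ) - monomial e' 1 =
          monomial c 1 * (X J1 * X J2 - X J3 * X J4) := by
        rw [mul_sub, ← mul_assoc, ← mul_assoc, mX, mX, mX, mX, ← hdc, ← he']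
      have hmem1 : monomial d (1 : ℂ) - monomial e' 1 ∈
          Ideal.span {f : MvPolynomial {J : Set P // IsLowerIdeal lt J} ℂ |
            ∃ J1 J2 J3 J4 : {J : Set P // IsLowerIdeal lt J},
              ¬ J1.1 ⊆ J2.1 ∧ ¬ J2.1 ⊆ J1.1 ∧
              J3.1 = J1.1 ∪ J2.1 ∧ J4.1 = starOp lt' J1.1 J2.1 ∧
              f = MvPolynomial.X J1 * MvPolynomial.X J2 -
                    MvPolynomial.X J3 * MvPolynomial.X J4} := by
        rw [hkey]
        exact Ideal.mul_mem_left _ _ (Ideal.subset_span hgen)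
      -- measure bookkeeping
      have hdeg : degf lt e' = degf lt d := by
        rw [he', hdc, degf_add, degf_add, degf_add, degf_add, degf_single, degf_single,
          degf_single, degf_single]
      have hcard1 : J1.1.ncard < J3.1.ncard := by
        refine Set.ncard_lt_ncard ?_ (Set.toFinite _)
        refine ⟨Set.subset_union_left, fun hsub => ?_⟩
        exact h21 fun x hx => hsub (Set.subset_union_right hx)
      have hcard2 : J2.1.ncard < J3.1.ncard := by
        refine Set.ncard_lt_ncard ?_ (Set.toFinite _)
        refine ⟨Set.subset_union_right, fun hsub => ?_⟩
        exact h12 fun x hx => hsub (Set.subset_union_left hx)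
      have hpow : 2 ^ J1.1.ncard + 2 ^ J2.1.ncard ≤ 2 ^ J3.1.ncard := by
        have l1 : 2 ^ J1.1.ncard ≤ 2 ^ (J3.1.ncard - 1) :=
          Nat.pow_le_pow_right (by norm_num) (by omega)
        have l2 : 2 ^ J2.1.ncard ≤ 2 ^ (J3.1.ncard - 1) :=
          Nat.pow_le_pow_right (by norm_num) (by omega)
        have l3 : 2 ^ (J3.1.ncard - 1) + 2 ^ (J3.1.ncard - 1) = 2 ^ (J3.1.ncard - 1 + 1) := by
          rw [pow_succ]; omega
        have l4 : J3.1.ncard - 1 + 1 = J3.1.ncard := by omega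
        rw [l4] at l3
        omega
      have hmu : mu lt d + 1 ≤ mu lt e' := by
        have h1 : mu lt d = mu lt c + 2 ^ J1.1.ncard + 2 ^ J2.1.ncard := by
          rw [hdc, mu_add, mu_add, mu_single, mu_single, one_mul, one_mul]
        have h2 : mu lt e' = mu lt c + 2 ^ J3.1.ncard + 2 ^ J4.1.ncard := by
          rw [he', mu_add, mu_add, mu_single, mu_single, one_mul, one_mul]
        have h3 : 1 ≤ 2 ^ J4.1.ncard := Nat.one_le_two_pow
        omega
      have hble : mu lt e' ≤ 2 ^ (Fintype.card P) * degf lt d := hdeg ▸ mu_le lt e'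
      obtain ⟨e, hche, heme⟩ := ih e' (by rw [hdeg]; omega)
      refine ⟨e, hche, ?_⟩
      rw [← sub_add_sub_cancel (monomial d (1:ℂ)) (monomial e' 1) (monomial e 1)]
      exact add_mem hmem1 heme

end AuxAlg4

open MvPolynomial

/-- Let `φ : ℂ[X_J : J ∈ 𝒥] → ℂ[{z_p}_{p ∈ P}, t]` be determined by
`φ(X_J) = t · ∏_{p ∈ max_{lt'} J} z_p` (the variable `t` is `Sum.inr ()`, and `z_p` is
`Sum.inl p`).  Then `ker φ` is generated by the binomials
`X_{J1}·X_{J2} − X_{J1 ∪ J2}·X_{J1 *' J2}` over pairs of inclusion-incomparable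
`J1, J2 ∈ 𝒥`. -/
theorem stmt8 {P : Type*} [Fintype P] (lt lt' : P → P → Prop)
    (hltirr : ∀ p, ¬ lt p p) (hlttr : ∀ a b c, lt a b → lt b c → lt a c)
    (hlt'irr : ∀ p, ¬ lt' p p) (hlt'tr : ∀ a b c, lt' a b → lt' b c → lt' a c)
    (hweak : ∀ p q, lt' p q → lt p q)
    (hstar : ∀ J1 J2 : Set P, IsLowerIdeal lt J1 → IsLowerIdeal lt J2 →
      IsLowerIdeal lt (starOp lt' J1 J2)) :
    RingHom.ker
      (MvPolynomial.aeval (R := ℂ)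
        (fun J : {J : Set P // IsLowerIdeal lt J} =>
          (MvPolynomial.X (Sum.inr ()) *
            ∏ p ∈ (Set.toFinite (maxElems lt' J.1)).toFinset, MvPolynomial.X (Sum.inl p) :
            MvPolynomial (P ⊕ Unit) ℂ))) =
    Ideal.span
      {f : MvPolynomial {J : Set P // IsLowerIdeal lt J} ℂ |
        ∃ J1 J2 J3 J4 : {J : Set P // IsLowerIdeal lt J},
          ¬ J1.1 ⊆ J2.1 ∧ ¬ J2.1 ⊆ J1.1 ∧
          J3.1 = J1.1 ∪ J2.1 ∧ J4.1 = starOp lt' J1.1 J2.1 ∧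
          f = MvPolynomial.X J1 * MvPolynomial.X J2 -
                MvPolynomial.X J3 * MvPolynomial.X J4} := by
  classical
  show RingHom.ker (aeval (phiF lt lt')) = _
  set G : Set (MvPolynomial {J : Set P // IsLowerIdeal lt J} ℂ) :=
    {f : MvPolynomial {J : Set P // IsLowerIdeal lt J} ℂ |
      ∃ J1 J2 J3 J4 : {J : Set P // IsLowerIdeal lt J},
        ¬ J1.1 ⊆ J2.1 ∧ ¬ J2.1 ⊆ J1.1 ∧
        J3.1 = J1.1 ∪ J2.1 ∧ J4.1 = starOp lt' J1.1 J2.1 ∧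
        f = MvPolynomial.X J1 * MvPolynomial.X J2 -
              MvPolynomial.X J3 * MvPolynomial.X J4} with hG
  have hspanker : Ideal.span G ≤ RingHom.ker (aeval (phiF lt lt')) := by
    rw [Ideal.span_le]
    rintro f ⟨J1, J2, J3, J4, h12, h21, h3, h4, rfl⟩
    rw [SetLike.mem_coe, RingHom.mem_ker, map_sub, map_mul, map_mul, aeval_X, aeval_X,
      aeval_X, aeval_X, phiF_eq, phiF_eq, phiF_eq, phiF_eq, monomial_mul, monomial_mul,
      key_v lt lt' hlt'tr hweak J1 J2 J3 J4 h3 h4, sub_self]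
  refine le_antisymm ?_ hspanker
  intro f hf
  rw [RingHom.mem_ker] at hf
  have hred : ∀ d : {J : Set P // IsLowerIdeal lt J} →₀ ℕ,
      ∃ e : {J : Set P // IsLowerIdeal lt J} →₀ ℕ,
        (∀ J1 ∈ e.support, ∀ J2 ∈ e.support, J1.1 ⊆ J2.1 ∨ J2.1 ⊆ J1.1) ∧
        monomial d (1 : ℂ) - monomial e 1 ∈ Ideal.span G :=
    fun d => reduce lt lt' hstar (2 ^ (Fintype.card P) * degf lt d - mu lt d + 1) d
      (Nat.lt_succ_self _)
  choose σ hch hmem using hred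
  set g : MvPolynomial {J : Set P // IsLowerIdeal lt J} ℂ :=
    ∑ d ∈ f.support, monomial (σ d) (coeff d f) with hg
  have hfg : f - g ∈ Ideal.span G := by
    have hexp : f - g = ∑ d ∈ f.support,
        C (coeff d f) * (monomial d 1 - monomial (σ d) 1) := by
      conv_lhs => rw [f.as_sum]
      rw [hg, ← Finset.sum_sub_distrib]
      refine Finset.sum_congr rfl fun d _ => ?_
      simp [mul_sub, C_mul_monomial]
    rw [hexp]
    exact Ideal.sum_mem _ fun d _ => Ideal.mul_mem_left _ _ (hmem d)
  have hg0 : aeval (phiF lt lt') g = 0 := by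
    have := hspanker hfg
    rw [RingHom.mem_ker, map_sub, hf, zero_sub, neg_eq_zero] at this
    exact this
  have hgsupp : ∀ d ∈ g.support,
      ∀ J1 ∈ d.support, ∀ J2 ∈ d.support, J1.1 ⊆ J2.1 ∨ J2.1 ⊆ J1.1 := by
    intro d hd
    have hcoeff : coeff d g ≠ 0 := mem_support_iff.1 hd
    rw [hg, coeff_sum] at hcoeff
    obtain ⟨d', _, hne⟩ := Finset.exists_ne_zero_of_sum_ne_zero hcoeff
    rw [coeff_monomial] at hne
    have : σ d' = d := by by_contra hc; rw [if_neg hc] at hne; exact hne rfl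
    exact this ▸ hch d'
  have hgz : g = 0 := by
    apply MvPolynomial.ext
    intro d0
    rw [coeff_zero]
    by_cases h0 : d0 ∈ g.support
    · have hφg : aeval (phiF lt lt') g =
          ∑ d ∈ g.support, monomial (psi lt lt' d) (coeff d g) := by
        conv_lhs => rw [g.as_sum]
        rw [map_sum]
        refine Finset.sum_congr rfl fun d _ => ?_
        have : (monomial d) (coeff d g) = C (coeff d g) * monomial d 1 := by
          rw [C_mul_monomial, mul_one]
        rw [this, map_mul, phi_monomial, aeval_C, algebraMap_eq, C_mul_monomial, mul_one]
      have hc0 : coeff (psi lt lt' d0) (aeval (phiF lt lt') g) = coeff d0 g := by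
        rw [hφg, coeff_sum]
        rw [Finset.sum_eq_single_of_mem d0 h0]
        · rw [coeff_monomial, if_pos rfl]
        · intro d hd hne
          rw [coeff_monomial, if_neg]
          intro hpsi
          exact hne (psi_inj lt lt' hlt'irr hlt'tr hweak (degf lt d) d d0 rfl
            (hgsupp d hd) (hgsupp d0 h0) hpsi)
      rw [← hc0, hg0, coeff_zero]
    · exact notMem_support_iff.1 h0
  have : f = f - g := by rw [hgz, sub_zero]
  rw [this]
  exact hfg
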